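/- Let ε > 0 and let (s_n)_{n∈ℤ} be a sequence of real numbers that is ε-convex at critical points, i.e. for every n ∈ ℤ, if s_{n+1} − s_n ≥ −ε then s_{n+2} − s_{n+1} ≥ ε. Then for every positive integer N, the sequence (s_{nN})_{n∈ℤ} is (N·ε)-convex at critical points. -/

import Mathlib

/-- A sequence `s : ℤ → ℝ` is `ε`-convex at critical points if whenever
`s (n+1) - s n ≥ -ε`, one has `s (n+2) - s (n+1) ≥ ε`. -/
def EpsConvexAtCritical (ε : ℝ) (s : ℤ → ℝ) : Prop :=
  ∀ n : ℤ, s (n + 1) - s n ≥ -ε → s (n + 2) - s (n + 1) ≥ ε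

lemma telescope_aux (s : ℤ → ℝ) (a : ℤ) (N : ℕ) :
    s (a + N) - s a = ∑ i ∈ Finset.range N, (s (a + i + 1) - s (a + i)) := by
  induction N with
  | zero => simp
  | succ n ih =>
    rw [Finset.sum_range_succ, ← ih]
    have h1 : a + ((n : ℤ) + 1) = a + n + 1 := by ring
    push_cast
    rw [h1]
    ring

lemma prop_aux (ε : ℝ) (hε : 0 < ε) (s : ℤ → ℝ) (h : EpsConvexAtCritical ε s)
    (k : ℤ) (hk : s (k + 1) - s k ≥ -ε) :
    ∀ m : ℤ, k + 1 ≤ m → s (m + 1) - s m ≥ ε := by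
  intro m
  refine Int.le_induction (motive := fun m _ => s (m + 1) - s m ≥ ε) ?_ ?_ m
  · have := h k hk
    have h2 : k + 2 = k + 1 + 1 := by ring
    rwa [h2] at this
  · intro m _ ih
    have h1 : s (m + 1) - s m ≥ -ε := by linarith
    have := h m h1
    have h2 : m + 2 = m + 1 + 1 := by ring
    rwa [h2] at this

/-- Coarsifying an `ε`-convex sequence: if `(s_n)` is `ε`-convex at critical points,
then `(s_{nN})` is `Nε`-convex at critical points. -/
theorem coarsify_eps_convex (ε : ℝ) (hε : 0 < ε) (s : ℤ → ℝ)
    (h : EpsConvexAtCritical ε s) (N : ℕ) (hN : 0 < N) :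
    EpsConvexAtCritical ((N : ℝ) * ε) (fun n => s (n * N)) := by
  intro n hn
  simp only at hn ⊢
  have e1 : (n + 1) * (N : ℤ) = n * N + N := by ring
  have e2 : (n + 2) * (N : ℤ) = (n * N + N) + N := by ring
  rw [e1, telescope_aux s (n * N) N] at hn
  rw [e2, e1, telescope_aux s (n * N + N) N]
  -- find an index i < N with difference ≥ -ε
  have hex : ∃ i ∈ Finset.range N, s (n * N + i + 1) - s (n * N + i) ≥ -ε := by
    by_contra hc
    push_neg at hc
    have hlt : ∑ i ∈ Finset.range N, (s (n * N + i + 1) - s (n * N + i))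
        < ∑ _i ∈ Finset.range N, (-ε) := by
      apply Finset.sum_lt_sum_of_nonempty
      · exact Finset.nonempty_range_iff.mpr hN.ne'
      · intro i hi; exact hc i hi
    rw [Finset.sum_const, Finset.card_range] at hlt
    have : N • (-ε : ℝ) = -((N : ℝ) * ε) := by simp [mul_comm]
    rw [this] at hlt
    linarith
  obtain ⟨i, hi, hdi⟩ := hex
  have hiN : (i : ℤ) + 1 ≤ N := by
    have := Finset.mem_range.mp hi
    omega
  have hprop := prop_aux ε hε s h (n * N + i) hdi
  calc ∑ j ∈ Finset.range N, (s (n * N + N + j + 1) - s (n * N + N + j))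
      ≥ ∑ _j ∈ Finset.range N, ε := by
        apply Finset.sum_le_sum
        intro j hj
        have : n * N + i + 1 ≤ n * N + N + j := by
          have : (0 : ℤ) ≤ j := Int.ofNat_nonneg j
          linarith
        exact hprop (n * N + N + j) this
    _ = (N : ℝ) * ε := by rw [Finset.sum_const, Finset.card_range]; simp
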